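/- Every point of H_∞ is an accessible point of ∂Ω: for every w ∈ H_∞ one has w ∈ ∂Ω and there exists a continuous map γ : [0,1] → ℂ with γ(t) ∈ Ω for all t ∈ [0,1) and γ(1) = w. -/

import Mathlib

open Complex Metric

/-- The pair `(z_ω, ζ_ω)` attached to a binary word `ω` (a `List Bool`, where
concatenating a digit `s` to the word `ω` is represented by `s :: ω`):
`z_𝔢 = 0`, `ζ_𝔢 = 1`, `z_{ω·s} = z_ω + (1-ε) ζ_ω`, `ζ_{ω·1} = iλζ_ω`,
`ζ_{ω·0} = -iλζ_ω`. -/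
noncomputable def htreeData (ε lam : ℝ) : List Bool → ℂ × ℂ
  | [] => (0, 1)
  | s :: ω =>
      ((htreeData ε lam ω).1 + (1 - (ε : ℂ)) * (htreeData ε lam ω).2,
        (if s then Complex.I else -Complex.I) * (lam : ℂ) * (htreeData ε lam ω).2)

/-- The segment `I_ω = {z_ω + t ζ_ω : t ∈ [0,1]}`. -/
noncomputable def htreeSeg (ε lam : ℝ) (ω : List Bool) : Set ℂ :=
  (fun t : ℝ => (htreeData ε lam ω).1 + (t : ℂ) * (htreeData ε lam ω).2) '' Set.Icc 0 1

/-- The `H`-tree `H = ⋃_ω I_ω`. -/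
noncomputable def htree (ε lam : ℝ) : Set ℂ :=
  ⋃ ω : List Bool, htreeSeg ε lam ω

/-- `H_∞ = closure H \ H`. -/
noncomputable def htreeLimit (ε lam : ℝ) : Set ℂ :=
  closure (htree ε lam) \ htree ε lam

/-- `Ω_𝔢`, the open `ε/100`-neighbourhood of the segment `[0,1] ⊆ ℂ`. -/
noncomputable def htreeNbhdBase (ε : ℝ) : Set ℂ :=
  Metric.thickening (ε / 100) ((fun t : ℝ => (t : ℂ)) '' Set.Icc 0 1)

/-- `Ω_ω = {z_ω + ζ_ω u : u ∈ Ω_𝔢}`. -/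
noncomputable def htreeNbhd (ε lam : ℝ) (ω : List Bool) : Set ℂ :=
  (fun u : ℂ => (htreeData ε lam ω).1 + (htreeData ε lam ω).2 * u) '' htreeNbhdBase ε

/-- `Ω = ⋃_ω Ω_ω`. -/
noncomputable def htreeNbhdUnion (ε lam : ℝ) : Set ℂ :=
  ⋃ ω : List Bool, htreeNbhd ε lam ω

lemma htreeData_nil (ε lam : ℝ) : htreeData ε lam [] = (0, 1) := rfl

lemma htreeData_cons (ε lam : ℝ) (s : Bool) (ω : List Bool) :
    htreeData ε lam (s :: ω) =
      ((htreeData ε lam ω).1 + (1 - (ε : ℂ)) * (htreeData ε lam ω).2,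
        (if s then Complex.I else -Complex.I) * (lam : ℂ) * (htreeData ε lam ω).2) := rfl

lemma htreeData_append (ε lam : ℝ) (ω₁ ω₂ : List Bool) :
    htreeData ε lam (ω₁ ++ ω₂) =
      ((htreeData ε lam ω₂).1 + (htreeData ε lam ω₂).2 * (htreeData ε lam ω₁).1,
        (htreeData ε lam ω₂).2 * (htreeData ε lam ω₁).2) := by
  induction ω₁ with
  | nil => simp [htreeData_nil]
  | cons s ω₁ ih =>
      simp only [List.cons_append, htreeData_cons, ih]
      exact Prod.ext (by ring) (by ring)

lemma htreeData_norm (ε lam : ℝ) (hl : 0 ≤ lam) (ω : List Bool) :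
    ‖(htreeData ε lam ω).2‖ = lam ^ ω.length := by
  induction ω with
  | nil => simp [htreeData_nil]
  | cons s ω ih =>
      rcases s <;>
      simp [htreeData_cons, ih, norm_mul, Complex.norm_real, _root_.abs_of_nonneg hl, pow_succ, mul_comm]

lemma dir_mul_re (b : Bool) (lam : ℝ) (z : ℂ) :
    ((if b then Complex.I else -Complex.I) * (lam : ℝ) * z).re
      = (if b then (-1:ℝ) else 1) * (lam * z.im) := by
  cases b <;> simp [Complex.mul_re, Complex.mul_im] <;> ring

lemma dir_mul_im (b : Bool) (lam : ℝ) (z : ℂ) :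
    ((if b then Complex.I else -Complex.I) * (lam : ℝ) * z).im
      = (if b then (1:ℝ) else -1) * (lam * z.re) := by
  cases b <;> simp [Complex.mul_re, Complex.mul_im] <;> ring

lemma tile_bounds (ε lam : ℝ) (hε1 : 0 < ε) (hε2 : ε ≤ 1/100)
    (hl1 : (0:ℝ) < lam) (hl2 : lam ≤ 0.71) (hll : lam^2 ≤ 1/2 - ε) (ω : List Bool) (t : ℝ) (ht : t ∈ Set.Icc (0:ℝ) 1) :
    0 ≤ ((htreeData ε lam ω).1 + (t:ℂ) * (htreeData ε lam ω).2).re ∧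
    ((htreeData ε lam ω).1 + (t:ℂ) * (htreeData ε lam ω).2).re ≤ (1 - lam^2)⁻¹ ∧
    |((htreeData ε lam ω).1 + (t:ℂ) * (htreeData ε lam ω).2).im| ≤ lam * (1 - lam^2)⁻¹ := by
  have hlsq : lam^2 < 1 := by nlinarith
  have hpos : (0:ℝ) < 1 - lam^2 := by linarith
  have hCr : (1:ℝ) ≤ (1 - lam^2)⁻¹ := by
    rw [le_inv_comm₀] <;> nlinarith
  induction ω using List.reverseRecOn with
  | nil =>
      simp [htreeData_nil]
      refine ⟨ht.1, le_trans ht.2 hCr, by positivity⟩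
  | append_singleton l s ih =>
      obtain ⟨ih1, ih2, ih3⟩ := ih
      have hdata := htreeData_append ε lam l [s]
      have h1 : (htreeData ε lam [s]).1 = (1 - (ε:ℂ)) := by
        simp [htreeData_cons, htreeData_nil]
      have h2 : (htreeData ε lam [s]).2 = (if s then Complex.I else -Complex.I) * (lam:ℂ) := by
        simp [htreeData_cons, htreeData_nil]
      set P := (htreeData ε lam l).1 + (t:ℂ) * (htreeData ε lam l).2 with hP
      have key : (htreeData ε lam (l ++ [s])).1 + (t:ℂ) * (htreeData ε lam (l ++ [s])).2
          = (1 - (ε:ℂ)) + (if s then Complex.I else -Complex.I) * (lam:ℂ) * P := by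
        rw [hdata, h1, h2]; ring
      rw [key]
      have hre : ((1 - (ε:ℂ)) + (if s then Complex.I else -Complex.I) * (lam:ℂ) * P).re
          = (1 - ε) + (if s then (-1:ℝ) else 1) * (lam * P.im) := by
        rw [Complex.add_re, dir_mul_re]
        simp
      have him : ((1 - (ε:ℂ)) + (if s then Complex.I else -Complex.I) * (lam:ℂ) * P).im
          = (if s then (1:ℝ) else -1) * (lam * P.re) := by
        rw [Complex.add_im, dir_mul_im]
        simp
      rw [hre, him]
      have habs : |(if s then (-1:ℝ) else 1) * (lam * P.im)| ≤ lam * (lam * (1-lam^2)⁻¹) := by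
        cases s <;> simp [abs_mul, _root_.abs_of_nonneg hl1.le] <;> nlinarith [abs_nonneg P.im]
      have habs2 : |(if s then (1:ℝ) else -1) * (lam * P.re)| ≤ lam * (1-lam^2)⁻¹ := by
        have : |P.re| ≤ (1-lam^2)⁻¹ := abs_le.2 ⟨by linarith, ih2⟩
        cases s <;> simp [abs_mul, _root_.abs_of_nonneg hl1.le] <;> nlinarith [abs_nonneg P.re]
      have h3 := abs_le.1 habs
      have hinv : (1 - lam^2)⁻¹ ≤ (1/2 + ε)⁻¹ := by
        apply inv_anti₀ <;> linarith
      have hkey2 : lam * (lam * (1-lam^2)⁻¹) ≤ 1 - 3*ε := by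
        have h4 : lam * (lam * (1-lam^2)⁻¹) = lam^2 * (1-lam^2)⁻¹ := by ring
        have h5 : lam^2 * (1-lam^2)⁻¹ ≤ (1/2 - ε) * (1/2 + ε)⁻¹ := by
          apply mul_le_mul hll hinv (by positivity) (by linarith)
        have h6 : (1/2 - ε) * (1/2 + ε)⁻¹ ≤ 1 - 3*ε := by
          rw [← div_eq_mul_inv, div_le_iff₀ (by linarith : (0:ℝ) < 1/2 + ε)]
          nlinarith
        linarith
      refine ⟨by linarith [h3.1, hkey2], ?_, habs2⟩
      have heq : lam * (lam * (1-lam^2)⁻¹) = (1-lam^2)⁻¹ - 1 := by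
        field_simp; ring
      linarith [h3.2, heq]

/-- The closed bounding set for the tree in its root frame. -/
def htreeKset (lam : ℝ) : Set ℂ :=
  {u : ℂ | 0 ≤ u.re ∧ u.re ≤ (1 - lam^2)⁻¹ ∧ |u.im| ≤ lam * (1 - lam^2)⁻¹}

lemma htreeKset_isClosed (lam : ℝ) : IsClosed (htreeKset lam) := by
  have h1 : IsClosed {u : ℂ | 0 ≤ u.re} :=
    isClosed_le continuous_const Complex.continuous_re
  have h2 : IsClosed {u : ℂ | u.re ≤ (1 - lam^2)⁻¹} :=
    isClosed_le Complex.continuous_re continuous_const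
  have h3 : IsClosed {u : ℂ | |u.im| ≤ lam * (1 - lam^2)⁻¹} :=
    isClosed_le (continuous_abs.comp Complex.continuous_im) continuous_const
  exact (h1.inter (h2.inter h3) : _)

lemma closure_htree_subset_Kset (ε lam : ℝ) (hε1 : 0 < ε) (hε2 : ε ≤ 1/100)
    (hl1 : (0:ℝ) < lam) (hl2 : lam ≤ 0.71) (hll : lam^2 ≤ 1/2 - ε) :
    closure (htree ε lam) ⊆ htreeKset lam := by
  rw [← (htreeKset_isClosed lam).closure_eq]
  apply closure_mono
  rintro x hx
  simp only [htree, Set.mem_iUnion, htreeSeg, Set.mem_image] at hx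
  obtain ⟨ω, t, ht, rfl⟩ := hx
  exact tile_bounds ε lam hε1 hε2 hl1 hl2 hll ω t ht

/-- the subtree rooted at ω -/
noncomputable def hsubtree (ε lam : ℝ) (ω : List Bool) : Set ℂ :=
  ⋃ ω₁ : List Bool, htreeSeg ε lam (ω₁ ++ ω)

lemma hsubtree_nil (ε lam : ℝ) : hsubtree ε lam [] = htree ε lam := by
  simp [hsubtree, htree]

lemma hsubtree_eq_image (ε lam : ℝ) (ω : List Bool) :
    hsubtree ε lam ω
      = (fun u : ℂ => (htreeData ε lam ω).1 + (htreeData ε lam ω).2 * u) '' htree ε lam := by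
  ext x
  simp only [hsubtree, Set.mem_iUnion, htreeSeg, Set.mem_image, htree]
  constructor
  · rintro ⟨ω₁, t, ht, rfl⟩
    refine ⟨(htreeData ε lam ω₁).1 + (t:ℂ) * (htreeData ε lam ω₁).2,
      ⟨ω₁, ⟨t, ht, rfl⟩⟩, ?_⟩
    rw [htreeData_append]
    ring
  · rintro ⟨u, ⟨ω₁, t, ht, rfl⟩, rfl⟩
    refine ⟨ω₁, t, ht, ?_⟩
    rw [htreeData_append]
    ring

/-- the affine chart as a homeomorphism -/
noncomputable def hchart (z ζ : ℂ) (hζ : ζ ≠ 0) : ℂ ≃ₜ ℂ :=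
  (Homeomorph.mulLeft₀ ζ hζ).trans (Homeomorph.addLeft z)

lemma hchart_apply (z ζ : ℂ) (hζ : ζ ≠ 0) (u : ℂ) : hchart z ζ hζ u = z + ζ * u := rfl

lemma hsubtree_decomp (ε lam : ℝ) (ω : List Bool) :
    hsubtree ε lam ω = htreeSeg ε lam ω ∪
      (hsubtree ε lam (false :: ω) ∪ hsubtree ε lam (true :: ω)) := by
  ext x
  simp only [hsubtree, Set.mem_union, Set.mem_iUnion]
  constructor
  · rintro ⟨ω₁, h⟩
    rcases List.eq_nil_or_concat ω₁ with rfl | ⟨l, s, rfl⟩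
    · exact Or.inl h
    · rcases s with _ | _
      · exact Or.inr (Or.inl ⟨l, by simpa using h⟩)
      · exact Or.inr (Or.inr ⟨l, by simpa using h⟩)
  · rintro (h | ⟨l, h⟩ | ⟨l, h⟩)
    · exact ⟨[], by simpa using h⟩
    · exact ⟨l ++ [false], by simpa using h⟩
    · exact ⟨l ++ [true], by simpa using h⟩

lemma htreeZeta_ne_zero (ε lam : ℝ) (hl : 0 < lam) (ω : List Bool) :
    (htreeData ε lam ω).2 ≠ 0 := by
  intro h
  have := htreeData_norm ε lam hl.le ω
  rw [h, norm_zero] at this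
  exact absurd this.symm (by positivity)

lemma closure_hsubtree (ε lam : ℝ) (hl : 0 < lam) (ω : List Bool) :
    closure (hsubtree ε lam ω)
      = (fun u : ℂ => (htreeData ε lam ω).1 + (htreeData ε lam ω).2 * u) ''
          closure (htree ε lam) := by
  have hζ := htreeZeta_ne_zero ε lam hl ω
  have h1 : (fun u : ℂ => (htreeData ε lam ω).1 + (htreeData ε lam ω).2 * u)
      = hchart (htreeData ε lam ω).1 (htreeData ε lam ω).2 hζ := rfl
  rw [hsubtree_eq_image, h1, ← Homeomorph.image_closure]

lemma htreeSeg_isClosed (ε lam : ℝ) (ω : List Bool) : IsClosed (htreeSeg ε lam ω) := by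
  have : IsCompact (htreeSeg ε lam ω) := by
    apply IsCompact.image isCompact_Icc
    exact continuous_const.add (Complex.continuous_ofReal.mul continuous_const)
  exact this.isClosed

lemma hstep (ε lam : ℝ) (w : ℂ) (ω : List Bool)
    (hw : w ∈ closure (hsubtree ε lam ω)) (hnw : w ∉ htree ε lam) :
    ∃ s : Bool, w ∈ closure (hsubtree ε lam (s :: ω)) := by
  rw [hsubtree_decomp, closure_union, closure_union] at hw
  rcases hw with h | h | h
  · exfalso
    rw [(htreeSeg_isClosed ε lam ω).closure_eq] at h
    exact hnw (Set.mem_iUnion.2 ⟨ω, h⟩)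
  · exact ⟨false, h⟩
  · exact ⟨true, h⟩

lemma htreeNbhd_isOpen (ε lam : ℝ) (hl : 0 < lam) (ω : List Bool) :
    IsOpen (htreeNbhd ε lam ω) := by
  have hζ := htreeZeta_ne_zero ε lam hl ω
  have h1 : htreeNbhd ε lam ω
      = hchart (htreeData ε lam ω).1 (htreeData ε lam ω).2 hζ '' htreeNbhdBase ε := rfl
  rw [h1, Homeomorph.isOpen_image]
  exact Metric.isOpen_thickening

lemma htreeNbhdUnion_isOpen (ε lam : ℝ) (hl : 0 < lam) :
    IsOpen (htreeNbhdUnion ε lam) :=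
  isOpen_iUnion (htreeNbhd_isOpen ε lam hl)

lemma htree_subset_nbhd (ε lam : ℝ) (hε : 0 < ε) :
    htree ε lam ⊆ htreeNbhdUnion ε lam := by
  rintro x hx
  obtain ⟨ω, t, ht, rfl⟩ := Set.mem_iUnion.1 hx
  have hmem : ((t:ℂ)) ∈ htreeNbhdBase ε :=
    Metric.self_subset_thickening (show (0:ℝ) < ε/100 by positivity) _ (Set.mem_image_of_mem _ ht)
  exact Set.mem_iUnion.2 ⟨ω, ⟨(t:ℂ), hmem, by ring⟩⟩

lemma base_mem_elim (ε : ℝ) (v : ℂ) (hv : v ∈ htreeNbhdBase ε) :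
    ∃ t : ℝ, t ∈ Set.Icc (0:ℝ) 1 ∧ ‖v - (t:ℂ)‖ < ε / 100 := by
  rw [htreeNbhdBase, Metric.mem_thickening_iff] at hv
  obtain ⟨y, ⟨t, ht, rfl⟩, hd⟩ := hv
  exact ⟨t, ht, by simpa [dist_eq_norm] using hd⟩

lemma hlam_facts (ε lam : ℝ) (hε1 : 0 < ε) (hε2 : ε < 1/100)
    (hlam : lam = (2 : ℝ) ^ (-(2 : ℝ)⁻¹) - ε) :
    0.69 ≤ lam ∧ lam ≤ 0.71 ∧ lam^2 ≤ 1/2 - ε := by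
  have hs : (2:ℝ) ^ (-(2 : ℝ)⁻¹) = (Real.sqrt 2)⁻¹ := by
    rw [Real.rpow_neg (by norm_num : (0:ℝ) ≤ 2)]
    congr 1
    rw [Real.sqrt_eq_rpow]
    norm_num
  have h2 : Real.sqrt 2 ^ 2 = 2 := Real.sq_sqrt (by norm_num)
  have hsp : 0 < Real.sqrt 2 := Real.sqrt_pos.2 (by norm_num)
  have hs1 : Real.sqrt 2 ≤ 1.4143 := by nlinarith
  have hs2 : 1.414 ≤ Real.sqrt 2 := by nlinarith
  have hi1 : (Real.sqrt 2)⁻¹ ≤ 0.70722 := by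
    rw [inv_le_comm₀ hsp (by norm_num)] at *
    nlinarith
  have hi2 : 0.707 ≤ (Real.sqrt 2)⁻¹ := by
    rw [le_inv_comm₀ (by norm_num) hsp] at *
    nlinarith
  have hinv2 : ((Real.sqrt 2)⁻¹)^2 = 1/2 := by
    rw [← h2]
    field_simp
    rw [Real.sqrt_sq hsp.le]
  subst hlam
  rw [hs]
  refine ⟨by linarith, by linarith, ?_⟩
  nlinarith

set_option maxHeartbeats 1000000 in
/-- Every point of `H_∞` is an accessible point of `∂Ω`. -/
theorem htreeLimit_subset_accessible_boundary
    (ε : ℝ) (hε1 : 0 < ε) (hε2 : ε < (1/100 : ℝ))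
    (lam : ℝ) (hlam : lam = (2 : ℝ) ^ (-(2 : ℝ)⁻¹) - ε) :
    ∀ w ∈ htreeLimit ε lam,
      w ∈ frontier (htreeNbhdUnion ε lam) ∧
      ∃ γ : ℝ → ℂ, ContinuousOn γ (Set.Icc 0 1) ∧
        (∀ t ∈ Set.Ico (0 : ℝ) 1, γ t ∈ htreeNbhdUnion ε lam) ∧ γ 1 = w := by
  classical
  obtain ⟨hl1, hl2, hll⟩ := hlam_facts ε lam hε1 hε2 hlam
  have hl0 : (0:ℝ) < lam := by linarith
  have hlt1 : lam < 1 := by linarith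
  have hεle : ε ≤ 1/100 := hε2.le
  rintro w ⟨hwc, hwn⟩
  -- the chain of words converging to w
  have h0 : w ∈ closure (hsubtree ε lam []) := by rwa [hsubtree_nil]
  have key : ∀ ω : List Bool, w ∈ closure (hsubtree ε lam ω) →
      ∃ s, w ∈ closure (hsubtree ε lam (s :: ω)) :=
    fun ω h => hstep ε lam w ω h hwn
  choose f hf using key
  let F : ℕ → Σ' ω : List Bool, w ∈ closure (hsubtree ε lam ω) :=
    fun n => Nat.rec ⟨[], h0⟩ (fun _ p => ⟨f p.1 p.2 :: p.1, hf p.1 p.2⟩) n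
  let c : ℕ → List Bool := fun n => (F n).1
  have hc : ∀ n, w ∈ closure (hsubtree ε lam (c n)) := fun n => (F n).2
  let σ : ℕ → Bool := fun n => f (c n) (hc n)
  have hcs : ∀ n, c (n+1) = σ n :: c n := fun n => rfl
  have hc0 : c 0 = [] := rfl
  have hclen : ∀ n, (c n).length = n := by
    intro n
    induction n with
    | zero => rfl
    | succ n ih => rw [hcs n]; simp [ih]
  set Z : ℕ → ℂ := fun n => (htreeData ε lam (c n)).1 with hZdef
  set Q : ℕ → ℂ := fun n => (htreeData ε lam (c n)).2 with hQdef
  have hQne : ∀ n, Q n ≠ 0 := fun n => htreeZeta_ne_zero ε lam hl0 (c n)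
  have hZrec : ∀ n, Z (n+1) = Z n + (1 - (ε:ℂ)) * Q n := by
    intro n
    rw [hZdef]
    simp only [hcs n, htreeData_cons]
    rfl
  have hQrec : ∀ n, Q (n+1) = (if σ n then Complex.I else -Complex.I) * (lam:ℂ) * Q n := by
    intro n
    rw [hQdef]
    simp only [hcs n, htreeData_cons]
  have hQnorm : ∀ n, ‖Q n‖ = lam ^ n := by
    intro n
    show ‖(htreeData ε lam (c n)).2‖ = lam ^ n
    rw [htreeData_norm ε lam hl0.le, hclen]
  -- membership of local coordinates in the bounding set
  have hu : ∀ n, (w - Z n) / Q n ∈ htreeKset lam := by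
    intro n
    have h := hc n
    rw [closure_hsubtree ε lam hl0] at h
    obtain ⟨x, hx, hxe⟩ := h
    have hxe' : Z n + Q n * x = w := hxe
    have hux : (w - Z n) / Q n = x := by
      rw [← hxe', add_sub_cancel_left]
      exact mul_div_cancel_left₀ x (hQne n)
    rw [hux]
    exact closure_htree_subset_Kset ε lam hε1 hεle hl0 hl2 hll hx
  -- recursion for the local coordinates
  have hurec : ∀ n, (w - Z n) / Q n
      = (1 - (ε:ℂ)) + (if σ n then Complex.I else -Complex.I) * (lam:ℂ) *
          ((w - Z (n+1)) / Q (n+1)) := by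
    intro n
    have hD : ((if σ n then Complex.I else -Complex.I) : ℂ) ≠ 0 := by
      cases (σ n) <;> simp [Complex.I_ne_zero]
    have hlamC : (lam:ℂ) ≠ 0 := by
      simpa using hl0.ne'
    have hD' : ((if σ n then Complex.I else -Complex.I) * (lam:ℂ)) ≠ 0 := mul_ne_zero hD hlamC
    rw [hQrec n, hZrec n]
    rw [show ((if σ n then Complex.I else -Complex.I) * (lam:ℂ)) *
        ((w - (Z n + (1-(ε:ℂ))*Q n))/((if σ n then Complex.I else -Complex.I) * (lam:ℂ) * Q n))
        = (w - (Z n + (1-(ε:ℂ))*Q n))/Q n from by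
      rw [← mul_div_assoc, mul_div_mul_left _ _ hD']]
    have hsplit : w - Z n = (1-(ε:ℂ))*Q n + (w - (Z n + (1-(ε:ℂ))*Q n)) := by ring
    rw [hsplit, add_div, mul_div_cancel_right₀ _ (hQne n)]
  have hnum : lam * (lam * (1-lam^2)⁻¹) ≤ 1 - 3*ε := by
    have hpos : (0:ℝ) < 1 - lam^2 := by nlinarith
    have hinv : (1 - lam^2)⁻¹ ≤ (1/2 + ε)⁻¹ := by
      apply inv_anti₀ (by linarith) (by linarith)
    have h5 : lam^2 * (1-lam^2)⁻¹ ≤ (1/2 - ε) * (1/2 + ε)⁻¹ :=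
      mul_le_mul hll hinv (by positivity) (by linarith)
    have h6 : (1/2 - ε) * (1/2 + ε)⁻¹ ≤ 1 - 3*ε := by
      rw [← div_eq_mul_inv, div_le_iff₀ (by linarith : (0:ℝ) < 1/2 + ε)]
      nlinarith
    nlinarith
  -- deep real-part lower bound
  have hRe2 : ∀ n, 2*ε ≤ ((w - Z n) / Q n).re := by
    intro n
    have h1 := hurec n
    have him := (hu (n+1)).2.2
    have : ((w - Z n)/Q n).re
        = (1 - ε) + (if σ n then (-1:ℝ) else 1) * (lam * ((w - Z (n+1))/Q (n+1)).im) := by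
      rw [h1, Complex.add_re, dir_mul_re]
      simp
    rw [this]
    have habs : |(if σ n then (-1:ℝ) else 1) * (lam * ((w - Z (n+1))/Q (n+1)).im)|
        ≤ lam * (lam * (1-lam^2)⁻¹) := by
      cases (σ n) <;>
        simp [abs_mul, _root_.abs_of_nonneg hl0.le] <;>
        nlinarith [abs_nonneg ((w - Z (n+1))/Q (n+1)).im]
    have h3 := (abs_le.1 habs).1
    linarith [h3, hnum]
  -- imaginary-part formula in the local frame
  have hImf : ∀ n, ((w - Z n) / Q n).im
      = (if σ n then (1:ℝ) else -1) * (lam * ((w - Z (n+1))/Q (n+1)).re) := by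
    intro n
    rw [hurec n, Complex.add_im, dir_mul_im]
    simp
  -- w is not in Ω
  have hnotin : w ∉ htreeNbhdUnion ε lam := by
    intro hmem
    obtain ⟨ω, v, hv, hveq⟩ := Set.mem_iUnion.1 hmem
    obtain ⟨t, ht, htd⟩ := base_mem_elim ε v hv
    set n := Nat.findGreatest (fun k => c k <:+ ω) ω.length with hn
    have hP0 : c 0 <:+ ω := by rw [hc0]; exact ⟨ω, by simp⟩
    have hsuf : c n <:+ ω := Nat.findGreatest_spec (P := fun k => c k <:+ ω) (Nat.zero_le _) hP0
    have hnle : n ≤ ω.length := Nat.findGreatest_le _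
    rcases eq_or_lt_of_le hnle with heq | hlt
    · -- ω = c n
      have hωeq : c n = ω := List.IsSuffix.eq_of_length hsuf (by rw [hclen]; exact heq)
      have hveq' : (htreeData ε lam ω).1 + (htreeData ε lam ω).2 * v = w := hveq
      have hZω : Z n = (htreeData ε lam ω).1 := by
        show (htreeData ε lam (c n)).1 = _
        rw [hωeq]
      have hQω : Q n = (htreeData ε lam ω).2 := by
        show (htreeData ε lam (c n)).2 = _
        rw [hωeq]
      have huv : (w - Z n) / Q n = v := by
        rw [hZω, hQω, ← hveq', add_sub_cancel_left]
        exact mul_div_cancel_left₀ v (by rw [← hQω]; exact hQne n)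
      have him1 : |v.im| < ε/100 := by
        have : |v.im - (t:ℂ).im| ≤ ‖v - (t:ℂ)‖ := by
          rw [← Complex.sub_im]
          exact Complex.abs_im_le_norm _
        simp only [Complex.ofReal_im, sub_zero] at this
        linarith
      have him2 : 2*ε*lam ≤ |((w - Z n)/Q n).im| := by
        rw [hImf n]
        have h := hRe2 (n+1)
        have habs : |((w - Z (n+1))/Q (n+1)).re| = ((w - Z (n+1))/Q (n+1)).re :=
          _root_.abs_of_nonneg (by linarith)
        cases (σ n) <;> simp [abs_mul, _root_.abs_of_nonneg hl0.le, habs] <;> nlinarith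
      rw [huv] at him2
      nlinarith
    · -- ω properly extends c n; the first extra digit differs from σ n
      obtain ⟨ω₂, hω₂⟩ := hsuf
      have hω₂ne : ω₂ ≠ [] := by
        intro h
        rw [h] at hω₂
        simp at hω₂
        rw [← hω₂, hclen] at hlt
        exact lt_irrefl _ hlt
      obtain ⟨l, s, rfl⟩ := (List.eq_nil_or_concat ω₂).resolve_left hω₂ne
      have hωform : ω = l ++ (s :: c n) := by
        rw [← hω₂]
        simp
      have hsne : s ≠ σ n := by
        intro h
        have hP1 : c (n+1) <:+ ω := by
          rw [hcs n, ← h, hωform]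
          exact ⟨l, rfl⟩
        exact Nat.findGreatest_is_greatest (by omega : n < n + 1)
          (by omega : n + 1 ≤ ω.length) hP1
      -- coordinates: (w - Z n)/Q n = (1-ε) + (dir s) * lam * q
      set q : ℂ := (htreeData ε lam l).1 + (htreeData ε lam l).2 * v with hq
      have hveq' : (htreeData ε lam ω).1 + (htreeData ε lam ω).2 * v = w := hveq
      have hZn : Z n = (htreeData ε lam (c n)).1 := rfl
      have hQn : Q n = (htreeData ε lam (c n)).2 := rfl
      have hw_expr : w = Z n + (1-(ε:ℂ))*Q n
          + ((if s then Complex.I else -Complex.I)*(lam:ℂ)*Q n) * q := by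
        rw [hZn, hQn, ← hveq', hωform, htreeData_append]
        simp only [htreeData_cons, hq]
        ring
      have hkey : (w - Z n) / Q n
          = (1 - (ε:ℂ)) + (if s then Complex.I else -Complex.I) * (lam:ℂ) * q := by
        rw [div_eq_iff (hQne n)]
        rw [hw_expr]
        ring
      -- Re q > -ε/100
      have hqre : -(ε/100) < q.re := by
        have h1 : q = ((htreeData ε lam l).1 + (t:ℂ) * (htreeData ε lam l).2)
            + (htreeData ε lam l).2 * (v - (t:ℂ)) := by
          rw [hq]; ring
        have h2 := (tile_bounds ε lam hε1 hεle hl0 hl2 hll l t ht).1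
        have h3 : |((htreeData ε lam l).2 * (v - (t:ℂ))).re|
            ≤ ‖(htreeData ε lam l).2 * (v - (t:ℂ))‖ := by
          exact Complex.abs_re_le_norm _
        have h4 : ‖(htreeData ε lam l).2 * (v - (t:ℂ))‖ < ε/100 := by
          rw [norm_mul, htreeData_norm ε lam hl0.le]
          calc lam ^ l.length * ‖v - (t:ℂ)‖ ≤ 1 * ‖v - (t:ℂ)‖ := by
                apply mul_le_mul_of_nonneg_right _ (norm_nonneg _)
                exact pow_le_one₀ hl0.le hlt1.le
            _ < ε/100 := by rw [one_mul]; exact htd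
        have h5 : q.re = ((htreeData ε lam l).1 + (t:ℂ) * (htreeData ε lam l).2).re
            + ((htreeData ε lam l).2 * (v - (t:ℂ))).re := by
          rw [h1, Complex.add_re]
        rw [h5]
        linarith [(abs_lt.1 (lt_of_le_of_lt h3 h4)).1]
      -- contradiction via imaginary parts
      have him1 : ((w - Z n)/Q n).im = (if s then (1:ℝ) else -1) * (lam * q.re) := by
        rw [hkey, Complex.add_im, dir_mul_im]
        simp
      have him2 := hImf n
      have hre2 := hRe2 (n+1)
      rw [him1] at him2
      cases hσ : (σ n) <;> rw [hσ] at him2 hsne <;>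
        rcases Bool.eq_false_or_eq_true s with hs | hs <;>
        (try (exact hsne hs)) <;> rw [hs] at him2 <;> simp at him2 <;> nlinarith
  -- frontier membership
  have hopen := htreeNbhdUnion_isOpen ε lam hl0
  have hfront : w ∈ frontier (htreeNbhdUnion ε lam) := by
    rw [hopen.frontier_eq]
    exact ⟨closure_mono (htree_subset_nbhd ε lam hε1) hwc, hnotin⟩
  refine ⟨hfront, ?_⟩
  -- the accessing path
  set φ : ℕ → ℝ → ℝ :=
    fun n t => max 0 (min 1 ((2:ℝ)^(n+1) * (t - (1 - (2:ℝ)⁻¹^n)))) with hφdef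
  have hφ0 : ∀ n t, 0 ≤ φ n t := fun n t => le_max_left _ _
  have hφ1 : ∀ n t, φ n t ≤ 1 := fun n t => max_le zero_le_one (min_le_left _ _)
  have hφcont : ∀ n, Continuous (φ n) := by
    intro n
    exact continuous_const.max (continuous_const.min
      (continuous_const.mul (continuous_id.sub continuous_const)))
  set γ : ℝ → ℂ := fun t => ∑' n, (φ n t) • ((1 - (ε:ℂ)) * Q n) with hγdef
  have hne1 : ‖(1:ℂ) - (ε:ℂ)‖ ≤ 1 := by
    rw [show (1:ℂ) - (ε:ℂ) = ((1 - ε : ℝ) : ℂ) by push_cast; ring, Complex.norm_real,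
      Real.norm_eq_abs, _root_.abs_of_nonneg (by linarith)]
    linarith
  have hbound : ∀ n t, ‖(φ n t) • ((1 - (ε:ℂ)) * Q n)‖ ≤ lam ^ n := by
    intro n t
    rw [norm_smul, norm_mul, hQnorm]
    have h2 : ‖φ n t‖ ≤ 1 := by
      rw [Real.norm_eq_abs, _root_.abs_of_nonneg (hφ0 n t)]
      exact hφ1 n t
    calc ‖φ n t‖ * (‖(1:ℂ) - (ε:ℂ)‖ * lam ^ n) ≤ 1 * (1 * lam ^ n) := by
          apply mul_le_mul h2 _ (by positivity) zero_le_one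
          exact mul_le_mul_of_nonneg_right hne1 (by positivity)
      _ = lam ^ n := by ring
  have hsumgeo : Summable (fun n : ℕ => lam ^ n) :=
    summable_geometric_of_lt_one hl0.le hlt1
  have hγcont : Continuous γ :=
    continuous_tsum (fun n => ((hφcont n).smul continuous_const)) hsumgeo
      (fun n t => hbound n t)
  have hpart : ∀ N, ∑ k ∈ Finset.range N, (1 - (ε:ℂ)) * Q k = Z N := by
    intro N
    induction N with
    | zero =>
        rw [Finset.sum_range_zero]
        rfl
    | succ N ih =>
        rw [Finset.sum_range_succ, ih, hZrec N]
  have hunorm : ∀ n, ‖(w - Z n)/Q n‖ ≤ 4 := by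
    intro n
    obtain ⟨ha, hb, hcim⟩ := hu n
    have h1 : (1 - lam^2)⁻¹ ≤ 2 := by
      rw [inv_le_comm₀ (by nlinarith) (by norm_num)]
      nlinarith
    have h2 := Complex.norm_le_abs_re_add_abs_im ((w - Z n)/Q n)
    have h3 : |((w - Z n)/Q n).re| ≤ 2 := by
      rw [_root_.abs_of_nonneg ha]; linarith
    nlinarith [abs_nonneg ((w - Z n)/Q n).im]
  have hZtend : Filter.Tendsto Z Filter.atTop (nhds w) := by
    rw [tendsto_iff_norm_sub_tendsto_zero]
    have hb : ∀ n, ‖Z n - w‖ ≤ 4 * lam ^ n := by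
      intro n
      have h1 : Z n - w = -(Q n * ((w - Z n)/Q n)) := by
        rw [mul_div_cancel₀ _ (hQne n)]
        ring
      rw [h1, norm_neg, norm_mul, hQnorm]
      calc lam ^ n * ‖(w - Z n)/Q n‖ ≤ lam ^ n * 4 :=
            mul_le_mul_of_nonneg_left (hunorm n) (by positivity)
        _ = 4 * lam ^ n := by ring
    exact squeeze_zero (fun n => norm_nonneg _) hb
      (by simpa using (tendsto_pow_atTop_nhds_zero_of_lt_one hl0.le hlt1).const_mul (4:ℝ))
  have hsummable : Summable (fun n => (1 - (ε:ℂ)) * Q n) := by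
    apply Summable.of_norm_bounded hsumgeo
    intro n
    rw [norm_mul, hQnorm]
    calc ‖(1:ℂ) - (ε:ℂ)‖ * lam ^ n ≤ 1 * lam ^ n :=
          mul_le_mul_of_nonneg_right hne1 (by positivity)
      _ = lam ^ n := one_mul _
  have htsum : ∑' n, (1 - (ε:ℂ)) * Q n = w := by
    have h1 := hsummable.hasSum.tendsto_sum_nat
    have h2 : (fun N => ∑ k ∈ Finset.range N, (1-(ε:ℂ))*Q k) = Z := funext hpart
    rw [h2] at h1
    exact tendsto_nhds_unique h1 hZtend
  refine ⟨γ, hγcont.continuousOn, ?_, ?_⟩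
  · rintro t ⟨ht0, ht1⟩
    have hex : ∃ m : ℕ, t < 1 - (2:ℝ)⁻¹^(m+1) := by
      obtain ⟨m, hm⟩ := exists_pow_lt_of_lt_one (by linarith : (0:ℝ) < 1 - t)
        (by norm_num : (2:ℝ)⁻¹ < 1)
      refine ⟨m, ?_⟩
      have : (2:ℝ)⁻¹^(m+1) ≤ (2:ℝ)⁻¹^m :=
        pow_le_pow_of_le_one (by norm_num) (by norm_num) (by omega)
      linarith
    set n := Nat.find hex with hndef
    have hn1 : t < 1 - (2:ℝ)⁻¹^(n+1) := Nat.find_spec hex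
    have hn0 : 1 - (2:ℝ)⁻¹^n ≤ t := by
      rcases Nat.eq_zero_or_pos n with h | h
      · rw [h]
        simpa using ht0
      · obtain ⟨m, hm⟩ := Nat.exists_eq_succ_of_ne_zero h.ne'
        have hmn : m < n := by omega
        have hnot := Nat.find_min hex hmn
        rw [hm]
        exact not_lt.1 hnot
    have hvan : ∀ k ∉ Finset.range (n+1), (φ k t) • ((1 - (ε:ℂ)) * Q k) = 0 := by
      intro k hk
      rw [Finset.mem_range, not_lt] at hk
      have hφk : φ k t = 0 := by
        apply max_eq_left
        have h2 : (2:ℝ)⁻¹^k ≤ (2:ℝ)⁻¹^(n+1) :=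
          pow_le_pow_of_le_one (by norm_num) (by norm_num) hk
        have harg : (2:ℝ)^(k+1) * (t - (1 - (2:ℝ)⁻¹^k)) ≤ 0 := by
          apply mul_nonpos_of_nonneg_of_nonpos (by positivity)
          linarith
        exact le_trans (min_le_right _ _) harg
      rw [hφk, zero_smul]
    have hones : ∀ k, k < n → φ k t = 1 := by
      intro k hk
      have e1 : (2:ℝ)⁻¹^n ≤ (2:ℝ)⁻¹^(k+1) :=
        pow_le_pow_of_le_one (by norm_num) (by norm_num) (by omega)
      have e3 : (2:ℝ)^(k+1) * ((2:ℝ)⁻¹^(k+1)) = 1 := by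
        rw [← mul_pow]
        norm_num
      have h1 : (1:ℝ) ≤ (2:ℝ)^(k+1) * (t - (1 - (2:ℝ)⁻¹^k)) := by
        have e4 : (2:ℝ)⁻¹^(k+1) + (2:ℝ)⁻¹^(k+1) = (2:ℝ)⁻¹^k := by
          rw [pow_succ]
          ring
        have e5 : t - (1 - (2:ℝ)⁻¹^k) ≥ (2:ℝ)⁻¹^(k+1) := by linarith
        calc (1:ℝ) = (2:ℝ)^(k+1) * ((2:ℝ)⁻¹^(k+1)) := e3.symm
          _ ≤ (2:ℝ)^(k+1) * (t - (1 - (2:ℝ)⁻¹^k)) :=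
              mul_le_mul_of_nonneg_left e5 (by positivity)
      show max 0 (min 1 ((2:ℝ)^(k+1) * (t - (1 - (2:ℝ)⁻¹^k)))) = 1
      rw [min_eq_left h1]
      exact max_eq_right zero_le_one
    have hγt : γ t = Z n + (φ n t) • ((1 - (ε:ℂ)) * Q n) := by
      show ∑' k, (φ k t) • ((1 - (ε:ℂ)) * Q k) = _
      rw [tsum_eq_sum hvan, Finset.sum_range_succ]
      congr 1
      rw [← hpart n]
      refine Finset.sum_congr rfl (fun k hk => ?_)
      rw [hones k (Finset.mem_range.1 hk), one_smul]
    have hr : (φ n t) • ((1 - (ε:ℂ)) * Q n) = (((φ n t) * (1 - ε) : ℝ) : ℂ) * Q n := by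
      rw [Complex.real_smul]
      push_cast
      ring
    have hrmem : (φ n t) * (1 - ε) ∈ Set.Icc (0:ℝ) 1 :=
      ⟨by nlinarith [hφ0 n t, hφ1 n t], by nlinarith [hφ0 n t, hφ1 n t]⟩
    apply htree_subset_nbhd ε lam hε1
    refine Set.mem_iUnion.2 ⟨c n, ⟨(φ n t) * (1 - ε), hrmem, ?_⟩⟩
    show (htreeData ε lam (c n)).1 + ((((φ n t) * (1 - ε) : ℝ)):ℂ) * (htreeData ε lam (c n)).2 = γ t
    rw [hγt, hr]
  · have hφone : ∀ n, φ n 1 = 1 := by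
      intro n
      have e3 : (2:ℝ)^(n+1) * ((1:ℝ) - (1 - (2:ℝ)⁻¹^n)) = 2 := by
        rw [show (1:ℝ) - (1 - (2:ℝ)⁻¹^n) = (2:ℝ)⁻¹^n by ring, pow_succ, mul_comm ((2:ℝ)^n) 2,
          mul_assoc, ← mul_pow]
        norm_num
      show max 0 (min 1 ((2:ℝ)^(n+1) * ((1:ℝ) - (1 - (2:ℝ)⁻¹^n)))) = 1
      rw [e3]
      norm_num
    show ∑' k, (φ k 1) • ((1 - (ε:ℂ)) * Q k) = w
    simp only [hφone, one_smul]
    exact htsum
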